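/- Let p be an odd prime and N even with p > N. Then N·(1 − T(N,0,p))/p ≡ Σ_{j=1}^{⌊p/N⌋} 1/j (mod p), i.e., N(1 − T(N,0,p)) ≡ p·H_{⌊p/N⌋} (mod p²) where H denotes the harmonic number interpreted modulo p. -/

import Mathlib

open Finset

lemma choose_pred_cast (p : ℕ) (hp : p.Prime) :
    ∀ k, k < p → ((Nat.choose (p - 1) k : ZMod p)) = (-1) ^ k := by
  intro k
  induction k with
  | zero => simp
  | succ k ih =>
    intro hk
    have hk' : k < p := Nat.lt_of_succ_lt hk
    have hpp : p - 1 + 1 = p := Nat.succ_pred_eq_of_pos hp.pos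
    have h1 : Nat.choose p (k + 1) = Nat.choose (p - 1) k + Nat.choose (p - 1) (k + 1) := by
      conv_lhs => rw [← hpp]
      rw [Nat.choose_succ_succ]
    have hdvd : (p : ℕ) ∣ Nat.choose p (k + 1) := hp.dvd_choose_self (Nat.succ_ne_zero k) hk
    have h0 : ((Nat.choose p (k + 1) : ℕ) : ZMod p) = 0 :=
      (ZMod.natCast_eq_zero_iff _ _).mpr hdvd
    rw [h1] at h0
    push_cast at h0
    have ihe := ih hk'
    rw [pow_succ]
    linear_combination h0 - ihe

/-- Z.-H. Sun's congruence: for an odd prime `p` and even `N` with `1 < N < p`,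
`N·(1 − T(N,0,p))/p ≡ Σ_{j=1}^{⌊p/N⌋} 1/j (mod p)`, inverses taken in `ℤ/pℤ`. -/
theorem sun_congruence_even (N p : ℕ) (hN : 1 < N) (hNeven : Even N)
    (hp : p.Prime) (hodd : Odd p) (hpN : N < p)
    (T : ℤ)
    (hT : T = ∑ j ∈ Finset.range (p + 1), if N ∣ j then (Nat.choose p j : ℤ) else 0) :
    (((N * (1 - T)) / p : ℤ) : ZMod p) =
      ∑ j ∈ Finset.Icc 1 (p / N), ((j : ZMod p))⁻¹ := by
  haveI : Fact p.Prime := ⟨hp⟩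
  have hN0 : 0 < N := by omega
  have hp0 : (p : ℤ) ≠ 0 := by exact_mod_cast hp.pos.ne'
  set m := p / N with hm
  have hmN : N * m ≤ p := by rw [hm, mul_comm]; exact Nat.div_mul_le_self p N
  have hbound : ∀ k ∈ Finset.Icc 1 m, 0 < N * k ∧ N * k < p := by
    intro k hk
    rw [Finset.mem_Icc] at hk
    constructor
    · exact Nat.mul_pos hN0 (by omega)
    · have h2 : N * k ≤ N * m := Nat.mul_le_mul_left N hk.2
      have hne : N * k ≠ p := by
        intro h
        have hdv : N ∣ p := ⟨k, h.symm⟩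
        rcases hp.eq_one_or_self_of_dvd N hdv with h1 | h1 <;> omega
      omega
  -- reindex
  have hre : T = ∑ k ∈ Finset.range (m + 1), (Nat.choose p (N * k) : ℤ) := by
    rw [hT, ← Finset.sum_filter]
    refine Finset.sum_nbij' (fun j => j / N) (fun k => N * k) ?_ ?_ ?_ ?_ ?_
    · intro j hj
      simp only [Finset.mem_filter, Finset.mem_range] at hj
      rw [Finset.mem_range]
      show j / N < m + 1
      have : j / N ≤ p / N := Nat.div_le_div_right (by omega)
      omega
    · intro k hk
      rw [Finset.mem_range] at hk
      simp only [Finset.mem_filter, Finset.mem_range]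
      show N * k < p + 1 ∧ N ∣ N * k
      refine ⟨?_, Dvd.intro k rfl⟩
      have : N * k ≤ N * m := Nat.mul_le_mul_left N (by omega)
      omega
    · intro j hj
      simp only [Finset.mem_filter] at hj
      exact Nat.mul_div_cancel' hj.2
    · intro k _
      exact Nat.mul_div_cancel_left k hN0
    · intro j hj
      simp only [Finset.mem_filter] at hj
      rw [Nat.mul_div_cancel' hj.2]
  -- split off the k = 0 term
  have hsplit : T = 1 + ∑ k ∈ Finset.Icc 1 m, (Nat.choose p (N * k) : ℤ) := by
    rw [hre, Finset.range_eq_Ico, Finset.sum_eq_sum_Ico_succ_bot (Nat.succ_pos m),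
      Nat.succ_eq_add_one, Finset.Ico_add_one_right_eq_Icc]
    simp
  -- each term is divisible by p
  have hdvd : ∀ k ∈ Finset.Icc 1 m,
      Nat.choose p (N * k) = p * (Nat.choose p (N * k) / p) := by
    intro k hk
    obtain ⟨h1, h2⟩ := hbound k hk
    exact (Nat.mul_div_cancel' (hp.dvd_choose_self (by omega) h2)).symm
  -- value of each quotient mod p
  have hterm : ∀ k ∈ Finset.Icc 1 m,
      (N : ZMod p) * ((Nat.choose p (N * k) / p : ℕ) : ZMod p) = -((k : ZMod p))⁻¹ := by
    intro k hk
    obtain ⟨h1, h2⟩ := hbound k hk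
    have hkey : p * Nat.choose (p - 1) (N * k - 1) = Nat.choose p (N * k) * (N * k) := by
      have h := Nat.add_one_mul_choose_eq (p - 1) (N * k - 1)
      rw [show p - 1 + 1 = p by omega, show N * k - 1 + 1 = N * k by omega] at h
      exact h
    have hc : Nat.choose (p - 1) (N * k - 1) = (Nat.choose p (N * k) / p) * (N * k) := by
      apply Nat.eq_of_mul_eq_mul_left hp.pos
      rw [hkey]
      conv_lhs => rw [hdvd k hk]
      ring
    have hcast : ((Nat.choose (p - 1) (N * k - 1) : ℕ) : ZMod p) = (-1) ^ (N * k - 1) :=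
      choose_pred_cast p hp _ (by omega)
    have hNkeven : Even (N * k) := hNeven.mul_right k
    have hNk1odd : Odd (N * k - 1) := by
      rcases hNkeven with ⟨r, hr⟩
      exact ⟨r - 1, by omega⟩
    have hval : ((Nat.choose p (N * k) / p : ℕ) : ZMod p) * ((N : ZMod p) * (k : ZMod p))
        = -1 := by
      have := congrArg (fun n : ℕ => (n : ZMod p)) hc
      simp only [Nat.cast_mul] at this
      rw [hcast, hNk1odd.neg_one_pow] at this
      linear_combination -this
    have hone : (-((N : ZMod p) * ((Nat.choose p (N * k) / p : ℕ) : ZMod p))) * (k : ZMod p)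
        = 1 := by linear_combination -hval
    have := eq_inv_of_mul_eq_one_left hone
    linear_combination -this
  -- put it together over ℤ
  have hsum : ∑ k ∈ Finset.Icc 1 m, (Nat.choose p (N * k) : ℤ)
      = p * ∑ k ∈ Finset.Icc 1 m, ((Nat.choose p (N * k) / p : ℕ) : ℤ) := by
    rw [Finset.mul_sum]
    refine Finset.sum_congr rfl fun k hk => ?_
    exact_mod_cast congrArg (fun n : ℕ => (n : ℤ)) (hdvd k hk)
  have hdiveq : ((N : ℤ) * (1 - T)) / p
      = -((N : ℤ) * ∑ k ∈ Finset.Icc 1 m, ((Nat.choose p (N * k) / p : ℕ) : ℤ)) := by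
    have : (N : ℤ) * (1 - T)
        = p * (-((N : ℤ) * ∑ k ∈ Finset.Icc 1 m, ((Nat.choose p (N * k) / p : ℕ) : ℤ))) := by
      rw [hsplit, hsum]; ring
    rw [this, Int.mul_ediv_cancel_left _ hp0]
  rw [hdiveq, Int.cast_neg, Int.cast_mul, Int.cast_natCast, Int.cast_sum]
  simp only [Int.cast_natCast]
  rw [Finset.mul_sum, ← Finset.sum_neg_distrib]
  refine Finset.sum_congr rfl fun k hk => ?_
  rw [hterm k hk]
  ring
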